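/- Importance sampling, differentiable densities: in the importance-sampling setting, suppose the index set T is a bounded subset of ℝ^m equipped with a norm ‖·‖, T_c is an open set containing the convex hull of T, and p_{T_c} : ℝ × T_c → ℝ is a Borel measurable map with p_{T_c}(·, t) = p_t for every t ∈ T, differentiable with respect to its second argument t on all of T_c. If there exists a Borel measurable map F : ℝ → ℝ with ∫_ℝ |f(x)| F(x) dx < +∞ such that ‖∇_t p_{T_c}(x, t)‖ ≤ F(x) for all x ∈ ℝ and all t ∈ T_c, then the importance-sampling estimator Ê̲_n^{𝒫/P}(f) is a strongly consistent estimator of E̲^𝒫(f). -/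

import Mathlib

open MeasureTheory Filter Topology ProbabilityTheory
open scoped ENNReal

noncomputable section

/-- The positive part of an extended real number, as an element of `ℝ≥0∞`. -/
def epos (x : EReal) : ℝ≥0∞ := if x = ⊤ then ⊤ else ENNReal.ofReal x.toReal

/-- The (possibly infinite) expectation `E(g) = ∫ g⁺ − ∫ g⁻` of an extended-real map. -/
def eExp {Ω : Type*} [MeasurableSpace Ω] (μ : Measure Ω) (g : Ω → EReal) : EReal :=
  ((∫⁻ ω, epos (g ω) ∂μ : ℝ≥0∞) : EReal) - ((∫⁻ ω, epos (-(g ω)) ∂μ : ℝ≥0∞) : EReal)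

/-- `E(g)` exists: at least one of `E(g⁺)`, `E(g⁻)` is finite. -/
def eExpExists {Ω : Type*} [MeasurableSpace Ω] (μ : Measure Ω) (g : Ω → EReal) : Prop :=
  (∫⁻ ω, epos (g ω) ∂μ) ≠ ⊤ ∨ (∫⁻ ω, epos (-(g ω)) ∂μ) ≠ ⊤

/-- Outer expectation of an arbitrary extended-real map: the infimum of `E(g)` over all
measurable `g ≥ h` whose expectation exists. -/
def outerExp {Ω : Type*} [MeasurableSpace Ω] (μ : Measure Ω) (h : Ω → EReal) : EReal :=
  sInf {y : EReal | ∃ g : Ω → EReal,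
    Measurable g ∧ (∀ ω, h ω ≤ g ω) ∧ eExpExists μ g ∧ eExp μ g = y}

/-- Inner expectation of an arbitrary extended-real map. -/
def innerExp {Ω : Type*} [MeasurableSpace Ω] (μ : Measure Ω) (h : Ω → EReal) : EReal :=
  - outerExp μ (fun ω => - h ω)

/-- `g` is a minimal measurable cover of `h` w.r.t. `μ`: it is measurable, dominates `h`
pointwise, and is a.s. below any measurable map dominating `h` pointwise. -/
def IsMinMeasCover {Ω : Type*} [MeasurableSpace Ω] (μ : Measure Ω) (h g : Ω → EReal) : Prop :=
  Measurable g ∧ (∀ ω, h ω ≤ g ω) ∧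
    ∀ g' : Ω → EReal, Measurable g' → (∀ ω, h ω ≤ g' ω) → ∀ᵐ ω ∂μ, g ω ≤ g' ω

/-- Absolute value on extended reals. -/
def eabs (x : EReal) : EReal := max x (-x)

/- ### Auxiliary lemmas -/

lemma coe_ciInf_ereal {ι : Sort*} [Nonempty ι] {g : ι → ℝ} (h : BddBelow (Set.range g)) :
    (⨅ i, ((g i : ℝ) : EReal)) = (((⨅ i, g i : ℝ)) : EReal) :=
  (Monotone.map_ciInf_of_continuousAt (continuous_coe_real_ereal.continuousAt)
    (fun _ _ hxy => EReal.coe_le_coe_iff.2 hxy) h).symm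

lemma eabs_coe (x : ℝ) : eabs ((x : ℝ) : EReal) = ((|x| : ℝ) : EReal) := by
  rw [eabs, ← EReal.coe_neg, abs_eq_max_neg]
  exact (Monotone.map_max (fun _ _ h => EReal.coe_le_coe_iff.2 h)).symm

lemma slln_aux {P : Measure ℝ} [IsProbabilityMeasure P]
    (μ : Measure (ℕ → ℝ)) [IsProbabilityMeasure μ]
    (hmap : ∀ k : ℕ, μ.map (fun ω => ω k) = P)
    (hind : iIndepFun
      (fun k (ω : ℕ → ℝ) => ω k) μ)
    (q : ℝ → ℝ) (hqm : Measurable q) (hqi : Integrable q P) :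
    ∀ᵐ ω ∂μ, Tendsto (fun n : ℕ => (n : ℝ)⁻¹ * ∑ k ∈ Finset.range n, q (ω k)) atTop
      (𝓝 (∫ x, q x ∂P)) := by
  set Y : ℕ → (ℕ → ℝ) → ℝ := fun k ω => q (ω k) with hY
  have hYm : ∀ k, Measurable (Y k) := fun k => hqm.comp (measurable_pi_apply k)
  have hid : ∀ k, IdentDistrib (Y k) (Y 0) μ μ := fun k =>
    ⟨(hYm k).aemeasurable, (hYm 0).aemeasurable, by
      show μ.map (q ∘ fun ω => ω k) = μ.map (q ∘ fun ω => ω 0)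
      rw [← Measure.map_map hqm (measurable_pi_apply k),
        ← Measure.map_map hqm (measurable_pi_apply 0), hmap, hmap]⟩
  have hint : Integrable (Y 0) μ := by
    exact (integrable_map_measure (f := fun ω : ℕ → ℝ => ω 0) (g := q)
      (by rw [hmap]; exact hqi.aestronglyMeasurable) (measurable_pi_apply 0).aemeasurable).1
      (by rw [hmap]; exact hqi)
  have hindep : Pairwise (Function.onFun (IndepFun · · μ) Y) := fun i j hij =>
    (hind.indepFun hij).comp hqm hqm
  have hlim : μ[Y 0] = ∫ x, q x ∂P := by
    rw [← hmap 0, integral_map (measurable_pi_apply 0).aemeasurable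
      (by rw [hmap]; exact hqi.aestronglyMeasurable)]
  filter_upwards [strong_law_ae_real Y hint hindep hid] with ω hω
  rw [hlim] at hω
  simpa [div_eq_inv_mul] using hω

lemma wd_eq {p : ℝ → ℝ} :
    (volume.withDensity fun x => ENNReal.ofReal (p x))
      = volume.withDensity fun x => ((Real.toNNReal (p x) : NNReal) : ENNReal) := rfl

lemma wd_integral {p : ℝ → ℝ} (hpm : Measurable p) (hp0 : ∀ x, 0 ≤ p x) (q : ℝ → ℝ) :
    ∫ x, q x ∂(volume.withDensity fun x => ENNReal.ofReal (p x)) = ∫ x, p x * q x := by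
  rw [wd_eq, integral_withDensity_eq_integral_smul hpm.real_toNNReal]
  congr 1; funext x
  simp [NNReal.smul_def, Real.coe_toNNReal _ (hp0 x)]

lemma wd_integrable {p : ℝ → ℝ} (hpm : Measurable p) (hp0 : ∀ x, 0 ≤ p x) (q : ℝ → ℝ) :
    Integrable q (volume.withDensity fun x => ENNReal.ofReal (p x)) ↔
      Integrable (fun x => p x * q x) volume := by
  rw [wd_eq, integrable_withDensity_iff_integrable_smul hpm.real_toNNReal]
  constructor <;> intro h <;> refine h.congr (Filter.Eventually.of_forall fun x => ?_) <;>
    simp [NNReal.smul_def, Real.coe_toNNReal _ (hp0 x)]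

set_option maxHeartbeats 2000000 in
/-- **Importance sampling, differentiable densities.** In the
importance-sampling setting, suppose `T ⊆ ℝ^m` is bounded, `T_c` is an open set containing
the convex hull of `T`, and `p_{T_c} : ℝ × T_c → ℝ` is a Borel measurable extension of the
densities `(p_t)_{t∈T}`, differentiable in its second argument on `T_c`, with gradient
bounded by a Borel measurable `F : ℝ → ℝ` satisfying `∫ |f| F dx < +∞`. Then the
importance-sampling estimator `Ê̲_n^{𝒫/P}(f)` is a strongly consistent estimator of
`E̲^𝒫(f)`. -/
theorem importance_sampling_differentiable_consistency
    {m : ℕ}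
    (T Tc : Set (EuclideanSpace ℝ (Fin m))) (hTne : T.Nonempty)
    (hTbdd : Bornology.IsBounded T)
    (hTc : IsOpen Tc) (hhull : convexHull ℝ T ⊆ Tc)
    (p : ℝ → ℝ) (hpm : Measurable p) (hp0 : ∀ x, 0 ≤ p x)
    (P : Measure ℝ) (hP : P = volume.withDensity (fun x => ENNReal.ofReal (p x)))
    [IsProbabilityMeasure P]
    (pt : EuclideanSpace ℝ (Fin m) → ℝ → ℝ)
    (hptm : ∀ t ∈ T, Measurable (pt t)) (hpt0 : ∀ t ∈ T, ∀ x, 0 ≤ pt t x)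
    (Pt : EuclideanSpace ℝ (Fin m) → Measure ℝ)
    (hPt : ∀ t ∈ T, Pt t = volume.withDensity (fun x => ENNReal.ofReal (pt t x)))
    (hPtprob : ∀ t ∈ T, IsProbabilityMeasure (Pt t))
    (hsupp : ∀ t ∈ T, ∀ x, pt t x ≠ 0 → p x ≠ 0)
    (f : ℝ → ℝ) (hf : Measurable f)
    (hfint : ∀ t ∈ T, Integrable f (Pt t))
    (hsup : BddAbove ((fun t => ∫ x, |f x| ∂(Pt t)) '' T))
    -- the measurable extension `p_{T_c}` and its gradient in the parameter
    (pTc : ℝ → EuclideanSpace ℝ (Fin m) → ℝ)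
    (hpTcm : Measurable (fun q : ℝ × EuclideanSpace ℝ (Fin m) => pTc q.1 q.2))
    (hagree : ∀ t ∈ T, ∀ x : ℝ, pTc x t = pt t x)
    (D : ℝ → EuclideanSpace ℝ (Fin m) → EuclideanSpace ℝ (Fin m))
    (hdiff : ∀ x : ℝ, ∀ t ∈ Tc, HasGradientAt (fun s => pTc x s) (D x t) t)
    (F : ℝ → ℝ) (hFm : Measurable F)
    (hfF : ∫⁻ x, ENNReal.ofReal (|f x| * F x) ≠ ⊤)
    (hgrad : ∀ x : ℝ, ∀ t ∈ Tc, ‖D x t‖ ≤ F x)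
    (μ : Measure (ℕ → ℝ)) [IsProbabilityMeasure μ]
    (hmap : ∀ k : ℕ, μ.map (fun ω => ω k) = P)
    (hind : iIndepFun
      (fun k (ω : ℕ → ℝ) => ω k) μ) :
    ∃ H : ℕ → (ℕ → ℝ) → EReal,
      (∀ n : ℕ, IsMinMeasCover μ
        (fun ω => eabs ((⨅ t : T, (((n : ℝ)⁻¹ *
            ∑ k ∈ Finset.range n, f (ω k) * pt t (ω k) / p (ω k) : ℝ) : EReal)) -
          ⨅ t : T, ((∫ x, f x ∂(Pt t) : ℝ) : EReal))) (H n)) ∧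
      ∀ᵐ ω ∂μ, Tendsto (fun n : ℕ => H n ω) atTop (𝓝 (0 : EReal)) := by
  classical
  obtain ⟨t₀, ht₀⟩ := hTne
  haveI : Nonempty (↥T) := ⟨⟨t₀, ht₀⟩⟩
  have hTsub : T ⊆ Tc := (subset_convexHull ℝ T).trans hhull
  set g : EuclideanSpace ℝ (Fin m) → ℝ → ℝ := fun t x => f x * pt t x / p x with hgdef
  set L : ℝ → ℝ := fun x => |f x| * F x / p x with hLdef
  have hF0 : ∀ x, 0 ≤ F x := fun x => (norm_nonneg _).trans (hgrad x t₀ (hTsub ht₀))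
  have hL0 : ∀ x, 0 ≤ L x := fun x => div_nonneg (mul_nonneg (abs_nonneg _) (hF0 x)) (hp0 x)
  have hLmeas : Measurable L := (hf.abs.mul hFm).div hpm
  have hgmeas : ∀ t ∈ T, Measurable (g t) := fun t ht => (hf.mul (hptm t ht)).div hpm
  have hptz : ∀ t ∈ T, ∀ x, p x = 0 → pt t x = 0 := by
    intro t ht x hx
    by_contra h
    exact (hsupp t ht x h) hx
  -- Lipschitz estimate for the densities, from the mean value inequality
  have hptlip : ∀ (x : ℝ), ∀ s ∈ T, ∀ t ∈ T, |pt t x - pt s x| ≤ F x * ‖t - s‖ := by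
    intro x s hs t ht
    have key := Convex.norm_image_sub_le_of_norm_hasFDerivWithin_le (𝕜 := ℝ)
      (f := fun u => pTc x u)
      (f' := fun u => (InnerProductSpace.toDual ℝ _) (D x u))
      (s := convexHull ℝ T)
      (fun u hu => ((hdiff x u (hhull hu)).hasFDerivAt).hasFDerivWithinAt)
      (fun u hu => by
        rw [LinearIsometryEquiv.norm_map]
        exact hgrad x u (hhull hu))
      (convex_convexHull ℝ T) (subset_convexHull ℝ T hs) (subset_convexHull ℝ T ht)
    rw [hagree t ht x, hagree s hs x] at key
    simpa [Real.norm_eq_abs] using key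
  -- Lipschitz estimate for the integrands
  have hglip : ∀ (x : ℝ), ∀ s ∈ T, ∀ t ∈ T, |g t x - g s x| ≤ L x * ‖t - s‖ := by
    intro x s hs t ht
    rcases eq_or_lt_of_le (hp0 x) with hpx | hpx
    · simp [hgdef, hLdef, ← hpx]
    · have hne : p x ≠ 0 := ne_of_gt hpx
      have h1 : g t x - g s x = f x * (pt t x - pt s x) / p x := by
        simp only [hgdef]
        field_simp
      rw [h1, abs_div, abs_mul, abs_of_pos hpx]
      rw [hLdef]
      have h2 : |f x| * |pt t x - pt s x| ≤ |f x| * (F x * ‖t - s‖) :=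
        mul_le_mul_of_nonneg_left (hptlip x s hs t ht) (abs_nonneg _)
      calc |f x| * |pt t x - pt s x| / p x ≤ |f x| * (F x * ‖t - s‖) / p x := by
            gcongr
        _ = |f x| * F x / p x * ‖t - s‖ := by ring
  -- integral identities
  have hptwise : ∀ t ∈ T, ∀ x, pt t x * f x = p x * g t x := by
    intro t ht x
    rcases eq_or_lt_of_le (hp0 x) with hpx | hpx
    · rw [hptz t ht x hpx.symm, ← hpx]; simp
    · simp only [hgdef]
      field_simp
  have hInt_eq : ∀ t ∈ T, ∫ x, f x ∂(Pt t) = ∫ x, g t x ∂P := by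
    intro t ht
    rw [hPt t ht, hP, wd_integral (hptm t ht) (hpt0 t ht), wd_integral hpm hp0]
    congr 1
    funext x
    exact hptwise t ht x
  have hgint : ∀ t ∈ T, Integrable (g t) P := by
    intro t ht
    rw [hP, wd_integrable hpm hp0]
    have h1 : Integrable (fun x => pt t x * f x) volume := by
      have h2 := hfint t ht
      rwa [hPt t ht, wd_integrable (hptm t ht) (hpt0 t ht)] at h2
    exact h1.congr (Filter.Eventually.of_forall fun x => hptwise t ht x)
  have hGint : Integrable (fun x => |f x| * F x) volume := by
    refine ⟨(hf.abs.mul hFm).aestronglyMeasurable, ?_⟩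
    rw [hasFiniteIntegral_iff_norm]
    have h3 : ∀ x, ENNReal.ofReal ‖|f x| * F x‖ = ENNReal.ofReal (|f x| * F x) := fun x => by
      rw [Real.norm_eq_abs, abs_of_nonneg (mul_nonneg (abs_nonneg _) (hF0 x))]
    simp only [h3]
    exact lt_top_iff_ne_top.2 hfF
  have hLint : Integrable L P := by
    rw [hP, wd_integrable hpm hp0]
    refine hGint.mono' ((hpm.mul hLmeas).aestronglyMeasurable)
      (Filter.Eventually.of_forall fun x => ?_)
    rw [Real.norm_eq_abs, abs_of_nonneg (mul_nonneg (hp0 x) (hL0 x))]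
    rcases eq_or_lt_of_le (hp0 x) with hpx | hpx
    · rw [← hpx, zero_mul]
      exact mul_nonneg (abs_nonneg _) (hF0 x)
    · simp only [hLdef]
      rw [mul_comm, div_mul_cancel₀ _ (ne_of_gt hpx)]
  set lam : ℝ := ∫ x, L x ∂P with hlamdef
  have hlam0 : 0 ≤ lam := integral_nonneg hL0
  -- Lipschitz estimate for the limiting integrals
  have halip : ∀ s ∈ T, ∀ t ∈ T,
      |(∫ x, f x ∂(Pt t)) - ∫ x, f x ∂(Pt s)| ≤ lam * ‖t - s‖ := by
    intro s hs t ht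
    rw [hInt_eq t ht, hInt_eq s hs, ← integral_sub (hgint t ht) (hgint s hs)]
    have h1 : |∫ x, (g t x - g s x) ∂P| ≤ ∫ x, |g t x - g s x| ∂P := by
      have := norm_integral_le_integral_norm (μ := P) (fun x => g t x - g s x)
      simpa [Real.norm_eq_abs] using this
    have h2 : ∫ x, |g t x - g s x| ∂P ≤ ∫ x, L x * ‖t - s‖ ∂P :=
      integral_mono (((hgint t ht).sub (hgint s hs)).abs) (hLint.mul_const _)
        (fun x => hglip x s hs t ht)
    rw [integral_mul_const] at h2
    exact h1.trans h2
  -- the empirical quantities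
  set A : ℕ → EuclideanSpace ℝ (Fin m) → (ℕ → ℝ) → ℝ :=
    fun n t ω => (n : ℝ)⁻¹ * ∑ k ∈ Finset.range n, g t (ω k) with hAdef
  set Lm : ℕ → (ℕ → ℝ) → ℝ :=
    fun n ω => (n : ℝ)⁻¹ * ∑ k ∈ Finset.range n, L (ω k) with hLmdef
  have hLm0 : ∀ n ω, 0 ≤ Lm n ω := fun n ω =>
    mul_nonneg (by positivity) (Finset.sum_nonneg fun k _ => hL0 _)
  have hAlip : ∀ n (ω : ℕ → ℝ), ∀ s ∈ T, ∀ t ∈ T,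
      |A n t ω - A n s ω| ≤ Lm n ω * ‖t - s‖ := by
    intro n ω s hs t ht
    have h1 : A n t ω - A n s ω
        = (n : ℝ)⁻¹ * ∑ k ∈ Finset.range n, (g t (ω k) - g s (ω k)) := by
      simp only [hAdef]
      rw [Finset.sum_sub_distrib, mul_sub]
    rw [h1, abs_mul, abs_of_nonneg (by positivity : (0:ℝ) ≤ (n:ℝ)⁻¹)]
    calc (n:ℝ)⁻¹ * |∑ k ∈ Finset.range n, (g t (ω k) - g s (ω k))|
        ≤ (n:ℝ)⁻¹ * ∑ k ∈ Finset.range n, |g t (ω k) - g s (ω k)| := by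
          gcongr
          exact Finset.abs_sum_le_sum_abs _ _
      _ ≤ (n:ℝ)⁻¹ * ∑ k ∈ Finset.range n, L (ω k) * ‖t - s‖ := by
          gcongr with k hk
          exact hglip (ω k) s hs t ht
      _ = Lm n ω * ‖t - s‖ := by
          simp only [hLmdef]
          rw [← Finset.sum_mul]
          ring
  -- a uniform bound on the diameter
  obtain ⟨R, hR⟩ := (Metric.isBounded_iff_subset_closedBall t₀).1 hTbdd
  have hRdist : ∀ t ∈ T, ‖t - t₀‖ ≤ R := fun t ht => by
    have := hR ht
    rwa [Metric.mem_closedBall, dist_eq_norm] at this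
  -- lower bounds
  have hAbdd : ∀ n (ω : ℕ → ℝ), BddBelow (Set.range fun t : ↥T => A n (↑t) ω) := by
    intro n ω
    refine ⟨A n t₀ ω - Lm n ω * R, ?_⟩
    rintro y ⟨t, rfl⟩
    have h1 := hAlip n ω t₀ ht₀ (↑t) t.2
    have h2 : Lm n ω * ‖(↑t : EuclideanSpace ℝ (Fin m)) - t₀‖ ≤ Lm n ω * R :=
      mul_le_mul_of_nonneg_left (hRdist _ t.2) (hLm0 n ω)
    have := abs_le.1 h1
    linarith [this.1]
  obtain ⟨B, hB⟩ := hsup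
  have hBb : ∀ t ∈ T, ∫ x, |f x| ∂(Pt t) ≤ B := fun t ht =>
    hB (Set.mem_image_of_mem _ ht)
  have habdd : BddBelow (Set.range fun t : ↥T => ∫ x, f x ∂(Pt (↑t))) := by
    refine ⟨-B, ?_⟩
    rintro y ⟨t, rfl⟩
    have h1 : -(∫ x, |f x| ∂(Pt ↑t)) ≤ ∫ x, f x ∂(Pt ↑t) := by
      rw [← integral_neg]
      exact integral_mono ((hfint _ t.2).abs.neg) (hfint _ t.2)
        (fun x => neg_abs_le (f x))
    have h2 := hBb (↑t) t.2
    simp only [Set.mem_setOf_eq]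
    linarith
  set cR : ℝ := ⨅ t : ↥T, ∫ x, f x ∂(Pt (↑t)) with hcRdef
  -- the countable dense subset
  obtain ⟨s₀, hs₀c, hs₀d⟩ := TopologicalSpace.exists_countable_dense (↥T)
  set S : Set (EuclideanSpace ℝ (Fin m)) := Subtype.val '' s₀ with hSdef
  have hSsub : S ⊆ T := by
    rintro u ⟨v, _, rfl⟩
    exact v.2
  have hScount : S.Countable := hs₀c.image _
  haveI : Countable ↥S := hScount.to_subtype
  have hSdense : ∀ t ∈ T, ∀ ε > (0 : ℝ), ∃ u ∈ S, ‖t - u‖ < ε := by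
    intro t ht ε hε
    obtain ⟨u, hu, hdu⟩ := hs₀d.exists_dist_lt (⟨t, ht⟩ : ↥T) hε
    refine ⟨↑u, Set.mem_image_of_mem _ hu, ?_⟩
    rwa [Subtype.dist_eq, dist_eq_norm] at hdu
  have hSne : S.Nonempty := by
    obtain ⟨u, hu, _⟩ := hSdense t₀ ht₀ 1 one_pos
    exact ⟨u, hu⟩
  haveI : Nonempty ↥S := hSne.to_subtype
  -- the real infima
  set rA : ℕ → (ℕ → ℝ) → ℝ := fun n ω => ⨅ t : ↥T, A n (↑t) ω with hrAdef
  set rS : ℕ → (ℕ → ℝ) → ℝ := fun n ω => ⨅ u : ↥S, A n (↑u) ω with hrSdef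
  have hSBdd : ∀ n (ω : ℕ → ℝ), BddBelow (Set.range fun u : ↥S => A n (↑u) ω) := by
    intro n ω
    refine (hAbdd n ω).mono ?_
    rintro y ⟨u, rfl⟩
    exact ⟨⟨↑u, hSsub u.2⟩, rfl⟩
  have hrAS : ∀ n ω, rA n ω = rS n ω := by
    intro n ω
    apply le_antisymm
    · exact le_ciInf fun u => ciInf_le (hAbdd n ω) ⟨↑u, hSsub u.2⟩
    · refine le_ciInf fun t => le_of_forall_pos_le_add fun ε hε => ?_
      have hd : (0:ℝ) < ε / (Lm n ω + 1) := div_pos hε (by linarith [hLm0 n ω])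
      obtain ⟨u, huS, hdu⟩ := hSdense (↑t) t.2 _ hd
      have h1 : rS n ω ≤ A n u ω := ciInf_le (hSBdd n ω) ⟨u, huS⟩
      have h2 := hAlip n ω u (hSsub huS) (↑t) t.2
      have h3 : Lm n ω * ‖(↑t : EuclideanSpace ℝ (Fin m)) - u‖ ≤ ε := by
        have h5 := mul_le_mul_of_nonneg_left hdu.le (hLm0 n ω)
        have h4 : Lm n ω * (ε / (Lm n ω + 1)) ≤ ε := by
          rw [mul_div_assoc', div_le_iff₀ (by linarith [hLm0 n ω] : (0:ℝ) < Lm n ω + 1)]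
          nlinarith [hLm0 n ω, hε.le]
        linarith
      have h6 := abs_le.1 h2
      linarith [h6.2]
  -- the candidate cover
  set H : ℕ → (ℕ → ℝ) → EReal := fun n ω => ((|rS n ω - cR| : ℝ) : EReal) with hHdef
  -- pointwise identification with the statement's map
  have heq : ∀ (n : ℕ) (ω : ℕ → ℝ),
      eabs ((⨅ t : T, (((n : ℝ)⁻¹ *
            ∑ k ∈ Finset.range n, f (ω k) * pt t (ω k) / p (ω k) : ℝ) : EReal)) -
          ⨅ t : T, ((∫ x, f x ∂(Pt t) : ℝ) : EReal)) = H n ω := by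
    intro n ω
    have e1 : (⨅ t : T, (((n : ℝ)⁻¹ *
          ∑ k ∈ Finset.range n, f (ω k) * pt t (ω k) / p (ω k) : ℝ) : EReal))
        = ((rA n ω : ℝ) : EReal) := by
      have e0 := coe_ciInf_ereal (g := fun t : ↥T => A n (↑t) ω) (hAbdd n ω)
      rw [hrAdef]
      simpa only [hAdef, hgdef] using e0
    have e2 : (⨅ t : T, ((∫ x, f x ∂(Pt t) : ℝ) : EReal)) = ((cR : ℝ) : EReal) := by
      have e0 := coe_ciInf_ereal (g := fun t : ↥T => ∫ x, f x ∂(Pt (↑t))) habdd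
      rw [hcRdef]
      exact e0
    rw [e1, e2, ← EReal.coe_sub, eabs_coe, hrAS n ω]
  -- measurability
  have hAmeas : ∀ n, ∀ t ∈ T, Measurable (fun ω : ℕ → ℝ => A n t ω) := by
    intro n t ht
    exact measurable_const.mul
      (Finset.measurable_sum _ fun k _ => (hgmeas t ht).comp (measurable_pi_apply k))
  have hHmeas : ∀ n, Measurable (H n) := by
    intro n
    apply measurable_coe_real_ereal.comp
    exact (Measurable.iInf (fun u : ↥S => hAmeas n (↑u) (hSsub u.2))).sub measurable_const
      |>.abs
  -- main convergence
  have hconv : ∀ᵐ ω ∂μ, Tendsto (fun n : ℕ => H n ω) atTop (𝓝 (0 : EReal)) := by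
    have hae1 : ∀ᵐ ω ∂μ, ∀ u ∈ S,
        Tendsto (fun n => A n u ω) atTop (𝓝 (∫ x, g u x ∂P)) :=
      (ae_ball_iff hScount).2 fun u hu =>
        slln_aux μ hmap hind (g u) (hgmeas u (hSsub hu)) (hgint u (hSsub hu))
    have hae2 : ∀ᵐ ω ∂μ, Tendsto (fun n => Lm n ω) atTop (𝓝 lam) :=
      slln_aux μ hmap hind L hLmeas hLint
    filter_upwards [hae1, hae2] with ω hω1 hω2
    have hmain : Tendsto (fun n => rS n ω) atTop (𝓝 cR) := by
      rw [Metric.tendsto_atTop]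
      intro ε' hε'
      set C : ℝ := 6 * lam + 3 with hCdef
      have hC : (0:ℝ) < C := by simp only [hCdef]; linarith
      set ε : ℝ := min 1 (ε' / (2 * C)) with hεdef
      have hε : 0 < ε := lt_min one_pos (by positivity)
      have hε1 : ε ≤ 1 := min_le_left _ _
      have hεC : ε * C ≤ ε' / 2 := by
        have h7 := min_le_right 1 (ε' / (2*C))
        calc ε * C ≤ (ε' / (2*C)) * C := mul_le_mul_of_nonneg_right h7 hC.le
          _ = ε' / 2 := by field_simp
      -- a finite `ε`-net of `T`
      have htb : TotallyBounded T :=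
        (hTbdd.isCompact_closure).totallyBounded.subset subset_closure
      obtain ⟨t', ht'sub, ht'fin, ht'cov⟩ := totallyBounded_iff_subset.1 htb
        {q : _ × _ | dist q.1 q.2 < ε} (Metric.dist_mem_uniformity hε)
      -- nearby points of `S`
      have hsel : ∀ y : EuclideanSpace ℝ (Fin m),
          ∃ v, y ∈ t' → v ∈ S ∧ ‖y - v‖ < ε := by
        intro y
        by_cases hy : y ∈ t'
        · obtain ⟨v, hv1, hv2⟩ := hSdense y (ht'sub hy) ε hε
          exact ⟨v, fun _ => ⟨hv1, hv2⟩⟩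
        · exact ⟨t₀, fun h => absurd h hy⟩
      choose u hu using hsel
      -- net property
      have hnet : ∀ t ∈ T, ∃ y ∈ t', ‖t - u y‖ < 2 * ε := by
        intro t ht
        obtain ⟨y, hy, hty⟩ := Set.mem_iUnion₂.1 (ht'cov ht)
        refine ⟨y, hy, ?_⟩
        have h1 : dist t y < ε := hty
        have h2 := (hu y hy).2
        calc ‖t - u y‖ = dist t (u y) := (dist_eq_norm _ _).symm
          _ ≤ dist t y + dist y (u y) := dist_triangle _ _ _
          _ < ε + ε := by rw [dist_eq_norm] at *; exact add_lt_add h1 h2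
          _ = 2 * ε := by ring
      -- eventual closeness at the net points
      have hev : ∀ᶠ n : ℕ in atTop,
          (∀ y ∈ t', |A n (u y) ω - ∫ x, f x ∂(Pt (u y))| < ε) ∧ |Lm n ω - lam| < ε := by
        refine ((eventually_all_finite ht'fin).2 fun y hy => ?_).and ?_
        · have h01 := hω1 (u y) (hu y hy).1
          rw [← hInt_eq (u y) (hSsub (hu y hy).1)] at h01
          have h02 := h01 (Metric.ball_mem_nhds _ hε)
          filter_upwards [h02] with n hn
          simpa [Real.dist_eq] using hn
        · have h02 := hω2 (Metric.ball_mem_nhds _ hε)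
          filter_upwards [h02] with n hn
          simpa [Real.dist_eq] using hn
      rw [eventually_atTop] at hev
      obtain ⟨N₀, hN₀⟩ := hev
      refine ⟨N₀, fun n hn => ?_⟩
      obtain ⟨hA', hLmn⟩ := hN₀ n hn
      have hLmb : Lm n ω ≤ lam + ε := by
        have h8 := (abs_lt.1 hLmn).2
        linarith
      rw [Real.dist_eq, ← hrAS n ω]
      -- lower bound
      have hlow : cR - (ε + 2*ε*(lam+ε)) ≤ rA n ω := by
        rw [hrAdef]
        refine le_ciInf fun t => ?_
        obtain ⟨y, hy, hty⟩ := hnet (↑t) t.2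
        have l1 := hAlip n ω (u y) (hSsub (hu y hy).1) (↑t) t.2
        have l2 : Lm n ω * ‖(↑t : EuclideanSpace ℝ (Fin m)) - u y‖ ≤ (lam + ε) * (2*ε) :=
          mul_le_mul hLmb hty.le (norm_nonneg _) (by linarith)
        have l3 := hA' y hy
        have l4 : cR ≤ ∫ x, f x ∂(Pt (u y)) :=
          ciInf_le habdd ⟨u y, hSsub (hu y hy).1⟩
        have l5 := abs_le.1 l1
        have l6 := abs_lt.1 l3
        have : A n (↑t) ω - A n (u y) ω ≥ -((lam + ε) * (2*ε)) := by linarith [l5.1]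
        nlinarith [l6.1]
      -- upper bound
      have hup : rA n ω ≤ cR + (ε + 2*ε*lam) := by
        have up : ∀ t : ↥T, rA n ω - (ε + 2*ε*lam) ≤ ∫ x, f x ∂(Pt (↑t)) := by
          intro t
          obtain ⟨y, hy, hty⟩ := hnet (↑t) t.2
          have l0 : rA n ω ≤ A n (u y) ω :=
            ciInf_le (hAbdd n ω) ⟨u y, hSsub (hu y hy).1⟩
          have l3 := hA' y hy
          have l6 := abs_lt.1 l3
          have l7 := halip (u y) (hSsub (hu y hy).1) (↑t) t.2
          have l8 : lam * ‖(↑t : EuclideanSpace ℝ (Fin m)) - u y‖ ≤ lam * (2*ε) :=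
            mul_le_mul_of_nonneg_left hty.le hlam0
          have l9 := abs_le.1 l7
          nlinarith [l9.1, l6.2]
        have := le_ciInf up
        rw [← hcRdef] at this
        linarith
      have hpos1 : (0:ℝ) ≤ 2*ε*lam := by positivity
      have hpos2 : (0:ℝ) ≤ 2*ε*(lam+ε) := by positivity
      have habs : |rA n ω - cR| ≤ ε + 2*ε*(lam+ε) + 2*ε*lam :=
        abs_le.2 ⟨by linarith, by linarith⟩
      have hfin : ε + 2*ε*(lam+ε) + 2*ε*lam ≤ ε * C := by
        simp only [hCdef]
        nlinarith
      have : |rA n ω - cR| ≤ ε' / 2 := le_trans habs (le_trans hfin hεC)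
      linarith
    have hre : Tendsto (fun n => |rS n ω - cR|) atTop (𝓝 0) := by
      have h9 := (hmain.sub_const cR).abs
      simpa using h9
    simp only [hHdef]
    rw [show (0 : EReal) = ((0:ℝ) : EReal) by simp]
    exact EReal.tendsto_coe.2 hre
  refine ⟨H, fun n => ⟨hHmeas n, fun ω => (heq n ω).le, fun g' hg'm hg' =>
    Filter.Eventually.of_forall fun ω => (heq n ω) ▸ hg' ω⟩, hconv⟩
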